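/- If every maximal clique of the projected graph of H is a hyperedge of H (H is conformal), then for any three hyperedges E_i, E_j, E_q of H there exists a hyperedge E such that (E_i ∩ E_j) ∪ (E_j ∩ E_q) ∪ (E_q ∩ E_i) ⊆ E. -/
import Mathlib


variable {V : Type*} [DecidableEq V] [Fintype V]

/-- Adjacency in the projected graph of a hypergraph with hyperedge set `E`. -/
def ProjAdj (E : Finset (Finset V)) (u v : V) : Prop :=
  u ≠ v ∧ ∃ e ∈ E, u ∈ e ∧ v ∈ e

/-- A clique in the projected graph. -/
def IsPClique (E : Finset (Finset V)) (C : Finset V) : Prop :=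
  ∀ u ∈ C, ∀ v ∈ C, u ≠ v → ProjAdj E u v

/-- A maximal clique in the projected graph. -/
def IsMaxPClique (E : Finset (Finset V)) (C : Finset V) : Prop :=
  IsPClique E C ∧ ∀ D : Finset V, IsPClique E D → C ⊆ D → C = D

theorem stmt2 (E : Finset (Finset V))
    (hne : ∀ e ∈ E, e.Nonempty)
    (hcov : ∀ v : V, ∃ e ∈ E, v ∈ e)
    (hconf : ∀ C : Finset V, IsMaxPClique E C → C ∈ E) :
    ∀ Ei ∈ E, ∀ Ej ∈ E, ∀ Ek ∈ E,
      ∃ e ∈ E, (Ei ∩ Ej) ∪ (Ej ∩ Ek) ∪ (Ek ∩ Ei) ⊆ e := by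
  intro Ei hEi Ej hEj Ek hEk
  set S := (Ei ∩ Ej) ∪ (Ej ∩ Ek) ∪ (Ek ∩ Ei) with hS
  have hclique : IsPClique E S := by
    intro u hu v hv huv
    refine ⟨huv, ?_⟩
    simp only [hS, Finset.mem_union, Finset.mem_inter] at hu hv
    rcases hu with (⟨h1, h2⟩ | ⟨h1, h2⟩) | ⟨h1, h2⟩ <;>
      rcases hv with (⟨h3, h4⟩ | ⟨h3, h4⟩) | ⟨h3, h4⟩
    · exact ⟨Ei, hEi, h1, h3⟩
    · exact ⟨Ej, hEj, h2, h3⟩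
    · exact ⟨Ei, hEi, h1, h4⟩
    · exact ⟨Ej, hEj, h1, h4⟩
    · exact ⟨Ej, hEj, h1, h3⟩
    · exact ⟨Ek, hEk, h2, h3⟩
    · exact ⟨Ei, hEi, h2, h3⟩
    · exact ⟨Ek, hEk, h1, h4⟩
    · exact ⟨Ek, hEk, h1, h3⟩
  classical
  -- extend S to a maximal clique
  have : ∃ D : Finset V, IsMaxPClique E D ∧ S ⊆ D := by
    let s : Finset (Finset V) :=
      Finset.univ.filter (fun D => IsPClique E D ∧ S ⊆ D)
    have hSs : S ∈ s := by
      simp only [s, Finset.mem_filter, Finset.mem_univ, true_and]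
      exact ⟨hclique, Finset.Subset.refl S⟩
    obtain ⟨D, hDs, hDmax⟩ := s.exists_max_image (fun D => D.card) ⟨S, hSs⟩
    simp only [s, Finset.mem_filter, Finset.mem_univ, true_and] at hDs
    refine ⟨D, ⟨hDs.1, ?_⟩, hDs.2⟩
    intro D' hD' hsub
    have hD's : D' ∈ s := by
      simp only [s, Finset.mem_filter, Finset.mem_univ, true_and]
      exact ⟨hD', hDs.2.trans hsub⟩
    exact Finset.eq_of_subset_of_card_le hsub (hDmax D' hD's)
  obtain ⟨D, hDmax, hSD⟩ := this
  exact ⟨D, hconf D hDmax, hSD⟩
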